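/- Let s and G be real numbers. If either (s ≥ 4 and G ≥ 2) or (s ≥ 3 and G ≥ 3), then G^s > e·s·(G−1), where G^s is the real power and e is Euler's number. -/

import Mathlib

open Real

lemma dave_bernoulli_rpow (s c G : ℝ) (hc : 0 < c) (hG : c ≤ G) (hs : 1 ≤ s) :
    c ^ s + s * c ^ (s - 1) * (G - c) ≤ G ^ s := by
  have ht : (0:ℝ) ≤ G / c - 1 := by
    have := (one_le_div hc).2 hG
    linarith
  have hb := one_add_mul_self_le_rpow_one_add (by linarith : (-1:ℝ) ≤ G / c - 1) hs
  have hcs : (0:ℝ) < c ^ s := rpow_pos_of_pos hc s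
  have hmul : c ^ s * (1 + s * (G / c - 1)) ≤ c ^ s * (1 + (G / c - 1)) ^ s := by
    exact mul_le_mul_of_nonneg_left hb hcs.le
  have h1 : (1 + (G / c - 1)) = G / c := by ring
  have h2 : c ^ s * (G / c) ^ s = G ^ s := by
    rw [← mul_rpow hc.le (div_nonneg (hc.le.trans hG) hc.le), mul_div_cancel₀ _ hc.ne']
  rw [h1, h2] at hmul
  have h3 : c ^ s * (1 + s * (G / c - 1)) = c ^ s + s * (c ^ s / c) * (G - c) := by
    field_simp
  have h4 : c ^ s / c = c ^ (s - 1) := by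
    rw [rpow_sub hc, rpow_one]
  rw [h3, h4] at hmul
  exact hmul

lemma dave_exp_s_lt (a s : ℝ) (hs : a ≤ s) (h1 : 0 ≤ a) :
    (2:ℝ) ^ (s - a) ≥ 1 + (s - a) * Real.log 2 := by
  have : (2:ℝ) ^ (s - a) = Real.exp ((s - a) * Real.log 2) := by
    rw [rpow_def_of_pos (by norm_num)]; ring_nf
  rw [this]
  have := Real.add_one_le_exp ((s - a) * Real.log 2)
  linarith

lemma dave_key (s c G : ℝ) (hc : 0 < c) (hG : c ≤ G) (hs : 1 ≤ s)
    (h1 : Real.exp 1 ≤ c ^ (s - 1)) (h2 : Real.exp 1 * s * (c - 1) < c ^ s) :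
    G ^ s > Real.exp 1 * s * (G - 1) := by
  have hb := dave_bernoulli_rpow s c G hc hG hs
  have hsp : 0 < s := by linarith
  have : Real.exp 1 * s * (G - c) ≤ s * c ^ (s - 1) * (G - c) := by
    have : Real.exp 1 * s ≤ s * c ^ (s - 1) := by
      nlinarith
    nlinarith [sub_nonneg.2 hG]
  nlinarith

/-- `G^s > e·s·(G−1)` when `s ≥ 4, G ≥ 2` or `s ≥ 3, G ≥ 3`. -/
theorem dave_second_derivative_condition
    (s G : ℝ) (h : (4 ≤ s ∧ 2 ≤ G) ∨ (3 ≤ s ∧ 3 ≤ G)) :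
    G ^ s > Real.exp 1 * s * (G - 1) := by
  have he : Real.exp 1 < 2.7182818286 := Real.exp_one_lt_d9
  have hep : (0:ℝ) < Real.exp 1 := Real.exp_pos 1
  rcases h with ⟨hs, hG⟩ | ⟨hs, hG⟩
  · apply dave_key s 2 G (by norm_num) hG (by linarith)
    · calc Real.exp 1 ≤ 2 ^ (3:ℝ) := by
            rw [show ((3:ℝ)) = ((3:ℕ):ℝ) by norm_num, rpow_natCast]; norm_num; linarith
          _ ≤ 2 ^ (s - 1) := by
            apply rpow_le_rpow_of_exponent_le (by norm_num) (by linarith)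
    · -- e * s * 1 < 2 ^ s
      have h4 : (2:ℝ) ^ s = 16 * 2 ^ (s - 4) := by
        rw [show (16:ℝ) = 2 ^ ((4:ℕ):ℝ) by rw [rpow_natCast]; norm_num,
          ← rpow_add (by norm_num)]
        ring_nf
      have hber := dave_exp_s_lt 4 s hs (by norm_num)
      have hlog : (0.6931471803:ℝ) < Real.log 2 := Real.log_two_gt_d9
      rw [h4]
      nlinarith
  · apply dave_key s 3 G (by norm_num) hG (by linarith)
    · calc Real.exp 1 ≤ 3 ^ (2:ℝ) := by
            rw [show ((2:ℝ)) = ((2:ℕ):ℝ) by norm_num, rpow_natCast]; norm_num; linarith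
          _ ≤ 3 ^ (s - 1) := by
            apply rpow_le_rpow_of_exponent_le (by norm_num) (by linarith)
    · -- e * s * 2 < 3 ^ s
      have h4 : (3:ℝ) ^ s = 27 * 3 ^ (s - 3) := by
        rw [show (27:ℝ) = 3 ^ ((3:ℕ):ℝ) by rw [rpow_natCast]; norm_num,
          ← rpow_add (by norm_num)]
        ring_nf
      have hber : (3:ℝ) ^ (s - 3) ≥ 1 + (s - 3) * Real.log 3 := by
        have h3 : (3:ℝ) ^ (s - 3) = Real.exp ((s - 3) * Real.log 3) := by
          rw [rpow_def_of_pos (by norm_num)]; ring_nf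
        rw [h3]
        have := Real.add_one_le_exp ((s - 3) * Real.log 3)
        linarith
      have hlog : (1:ℝ) ≤ Real.log 3 := by
        rw [show (1:ℝ) = Real.log (Real.exp 1) by rw [Real.log_exp]]
        apply Real.log_le_log hep
        linarith
      rw [h4]
      nlinarith
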